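/- Let G be a diamond-free graph containing an induced 5-cycle v1v2v3v4v5, with F_i the vertices adjacent exactly to v_i, v_{i-2}, v_{i+2} on the cycle and C_{j,j+2} the vertices adjacent exactly to v_j, v_{j+2}. If j ≠ i-1 (mod 5), then F_i is anti-complete to C_{j,j+2}. -/

import Mathlib

open SimpleGraph
def diamond : SimpleGraph (Fin 4) := (⊤ : SimpleGraph (Fin 4)).deleteEdges {s(0, 1)}

lemma diamond_emb {V : Type*} (G : SimpleGraph V) (x0 x1 x2 x3 : V)
    (n01 : x0 ≠ x1) (n02 : x0 ≠ x2) (n03 : x0 ≠ x3) (n12 : x1 ≠ x2) (n13 : x1 ≠ x3)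
    (n23 : x2 ≠ x3)
    (h02 : G.Adj x0 x2) (h03 : G.Adj x0 x3) (h12 : G.Adj x1 x2) (h13 : G.Adj x1 x3)
    (h23 : G.Adj x2 x3) (h01 : ¬ G.Adj x0 x1) : Nonempty (diamond ↪g G) := by
  have h01' : ¬ G.Adj x1 x0 := fun h => h01 h.symm
  refine ⟨⟨⟨![x0,x1,x2,x3], ?_⟩, ?_⟩⟩
  · intro a b h
    fin_cases a <;> fin_cases b <;> simp_all
  · intro a b
    change G.Adj (![x0,x1,x2,x3] a) (![x0,x1,x2,x3] b) ↔ _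
    fin_cases a <;> fin_cases b <;>
      simp_all [diamond, SimpleGraph.deleteEdges, h02.symm, h03.symm, h12.symm, h13.symm,
        h23.symm, G.irrefl, Sym2.eq, Sym2.rel_iff', Fin.ext_iff] <;> decide

theorem stmt_15 {V : Type*} (G : SimpleGraph V)
    (hD : ¬ Nonempty (diamond ↪g G))
    (v : Fin 5 → V) (hv : Function.Injective v)
    (hC5 : ∀ i j, G.Adj (v i) (v j) ↔ j = i + 1 ∨ i = j + 1)
    (C : Fin 5 → Set V)
    (hC : ∀ i, C i = {u | u ∉ Set.range v ∧ ∀ j, G.Adj u (v j) ↔ (j = i ∨ j = i + 2)})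
    (F : Fin 5 → Set V)
    (hF : ∀ i, F i = {u | u ∉ Set.range v ∧ ∀ j, G.Adj u (v j) ↔ (j = i ∨ j = i - 2 ∨ j = i + 2)}) :
    ∀ i j, j ≠ i - 1 → ∀ f ∈ F i, ∀ c ∈ C j, ¬ G.Adj f c := by
  intro i j hij f hf c hc hadj
  rw [hF i] at hf
  rw [hC j] at hc
  obtain ⟨fnr, hf2⟩ := hf
  obtain ⟨cnr, hc2⟩ := hc
  have fnv : ∀ k, f ≠ v k := fun k h => fnr ⟨k, h.symm⟩
  have cnv : ∀ k, c ≠ v k := fun k h => cnr ⟨k, h.symm⟩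
  have fnc : f ≠ c := hadj.ne
  have hcases : j = i ∨ j = i + 1 ∨ j = i + 2 ∨ j = i + 3 := by
    have : ∀ a b : Fin 5, a ≠ b - 1 → (a = b ∨ a = b + 1 ∨ a = b + 2 ∨ a = b + 3) := by decide
    exact this j i hij
  have hfi : G.Adj f (v i) := (hf2 i).mpr (Or.inl rfl)
  have hfi2 : G.Adj f (v (i+2)) := (hf2 (i+2)).mpr (Or.inr (Or.inr rfl))
  have hfi3 : G.Adj f (v (i+3)) := (hf2 (i+3)).mpr
    (Or.inr (Or.inl (show i + 3 = i - 2 by fin_omega)))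
  apply hD
  rcases hcases with rfl | rfl | rfl | rfl
  · -- j = i : diamond on (v i, v (i+2), f, c)
    refine diamond_emb G (v j) (v (j+2)) f c (hv.ne (by fin_omega))
      (fnv j).symm (cnv j).symm (fnv (j+2)).symm (cnv (j+2)).symm fnc
      hfi.symm ((hc2 j).mpr (Or.inl rfl)).symm hfi2.symm
      ((hc2 (j+2)).mpr (Or.inr rfl)).symm hadj ?_
    rw [hC5]
    fin_omega
  · -- j = i + 1 : diamond on (c, v (i+2), f, v (i+3))
    refine diamond_emb G c (v (i+2)) f (v (i+3)) (cnv (i+2)) fnc.symm (cnv (i+3))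
      (fnv (i+2)).symm (hv.ne (by fin_omega)) (fnv (i+3))
      hadj.symm ((hc2 (i+3)).mpr (Or.inr (by fin_omega)))
      hfi2.symm ((hC5 (i+2) (i+3)).mpr (Or.inl (by fin_omega))) hfi3 ?_
    rw [hc2]
    fin_omega
  · -- j = i + 2 : diamond on (c, v (i+3), f, v (i+2))
    refine diamond_emb G c (v (i+3)) f (v (i+2)) (cnv (i+3)) fnc.symm (cnv (i+2))
      (fnv (i+3)).symm (hv.ne (by fin_omega)) (fnv (i+2))
      hadj.symm ((hc2 (i+2)).mpr (Or.inl rfl))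
      hfi3.symm ((hC5 (i+3) (i+2)).mpr (Or.inr (by fin_omega))) hfi2 ?_
    rw [hc2]
    fin_omega
  · -- j = i + 3 : diamond on (v i, v (i+3), f, c)
    refine diamond_emb G (v i) (v (i+3)) f c (hv.ne (by fin_omega))
      (fnv i).symm (cnv i).symm (fnv (i+3)).symm (cnv (i+3)).symm fnc
      hfi.symm ((hc2 i).mpr (Or.inr (by fin_omega))).symm hfi3.symm
      ((hc2 (i+3)).mpr (Or.inl rfl)).symm hadj ?_
    rw [hC5]
    fin_omega
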